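/- If p ∈ closure(E_A) and q ∈ E_{A, supp(p)} (the exponential family truncated to the support of p), then q ∈ closure(E_A). -/

import Mathlib

open Filter Topology Real Finset
set_option maxHeartbeats 1000000


/-- The discrete exponential family `E_A` as a set of distributions on `I`. -/
noncomputable def expFam {I J : Type} [Fintype I] [Fintype J] (A : J → I → ℝ) :
    Set (I → ℝ) :=
  {q | ∃ θ : J → ℝ, q = fun i =>
    Real.exp (∑ j, θ j * A j i - Real.log (∑ i', Real.exp (∑ j, θ j * A j i')))}

/-- The truncation `p_{F,θ}` of the family to a set `F`. -/
noncomputable def ptrunc {I J : Type} [Fintype I] [Fintype J] [DecidableEq I]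
    (A : J → I → ℝ) (F : Finset I) (θ : J → ℝ) (i : I) : ℝ :=
  if i ∈ F then
    Real.exp (∑ j, θ j * A j i - Real.log (∑ i' ∈ F, Real.exp (∑ j, θ j * A j i')))
  else 0

open Classical in
/-- If `p ∈ closure(E_A)` and `q ∈ E_{A, supp(p)}` (the exponential family
truncated to the support of `p`), then `q ∈ closure(E_A)`. -/
theorem truncation_to_support_mem_closure {I J : Type} [Fintype I] [Fintype J]
    [DecidableEq I] (A : J → I → ℝ) (p : I → ℝ) (hp : p ∈ closure (expFam A))
    (θ : J → ℝ) :
    ptrunc A (Finset.univ.filter fun i => p i ≠ 0) θ ∈ closure (expFam A) := by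
  classical
  rcases isEmpty_or_nonempty I with hI | hI
  · have : ptrunc A (Finset.univ.filter fun i => p i ≠ 0) θ = p :=
      funext fun i => isEmptyElim i
    rw [this]; exact hp
  set F : Finset I := Finset.univ.filter fun i => p i ≠ 0 with hF
  obtain ⟨f, hfmem, hftend⟩ := mem_closure_iff_seq_limit.mp hp
  choose Θ hΘ using hfmem
  have hfi : ∀ i, Tendsto (fun n => f n i) atTop (𝓝 (p i)) :=
    fun i => tendsto_pi_nhds.mp hftend i
  have hfpos : ∀ n i, 0 < f n i := by
    intro n i
    rw [hΘ n]
    exact Real.exp_pos _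
  -- each f n sums to 1
  have hsum1 : ∀ n, ∑ i, f n i = 1 := by
    intro n
    have hS : (0:ℝ) < ∑ i', Real.exp (∑ j, Θ n j * A j i') :=
      Finset.sum_pos (fun _ _ => Real.exp_pos _) Finset.univ_nonempty
    calc ∑ i, f n i
        = ∑ i, Real.exp (∑ j, Θ n j * A j i) / (∑ i', Real.exp (∑ j, Θ n j * A j i')) := by
          refine Finset.sum_congr rfl fun i _ => ?_
          rw [hΘ n]
          simp only [Real.exp_sub, Real.exp_log hS]
      _ = 1 := by rw [← Finset.sum_div, div_self (ne_of_gt hS)]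
  have hpsum : ∑ i, p i = 1 := by
    have h1 : Tendsto (fun n => ∑ i, f n i) atTop (𝓝 (∑ i, p i)) :=
      tendsto_finset_sum _ fun i _ => hfi i
    have h2 : Tendsto (fun n => ∑ i, f n i) atTop (𝓝 1) := by
      simpa [hsum1] using (tendsto_const_nhds : Tendsto (fun _ : ℕ => (1:ℝ)) atTop (𝓝 1))
    exact tendsto_nhds_unique h1 h2
  have hFne : ∃ i0, i0 ∈ F := by
    by_contra h
    push_neg at h
    have : ∀ i, p i = 0 := by
      intro i
      by_contra hpi
      exact h i (by simp [hF, hpi])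
    simp [this] at hpsum
  obtain ⟨i0, hi0⟩ := hFne
  -- choose subsequence along which off-support values are super small
  have hev : ∀ k : ℕ, ∀ᶠ n in atTop, ∀ i, p i = 0 → f n i ≤ Real.exp (-((k:ℝ)+1)^2) := by
    intro k
    rw [Filter.eventually_all]
    intro i
    by_cases hpi : p i = 0
    · have hlt : p i < Real.exp (-((k:ℝ)+1)^2) := by
        rw [hpi]; exact Real.exp_pos _
      filter_upwards [(hfi i).eventually (eventually_le_nhds hlt)] with n hn _ using hn
    · filter_upwards with n hn; exact absurd hn hpi
  have hex : ∀ k : ℕ, ∃ n, k ≤ n ∧ ∀ i, p i = 0 → f n i ≤ Real.exp (-((k:ℝ)+1)^2) :=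
    fun k => ((eventually_ge_atTop k).and (hev k)).exists
  choose ν hν1 hν2 using hex
  have hνtend : Tendsto ν atTop atTop := tendsto_atTop_mono hν1 tendsto_id
  -- the tilted parameters
  set t : ℕ → ℝ := fun k => ((k:ℝ)+1)⁻¹ with ht
  have htpos : ∀ k, 0 < t k := fun k => by positivity
  have ht0 : Tendsto t atTop (𝓝 0) := by
    simpa [ht, one_div] using (tendsto_one_div_add_atTop_nhds_zero_nat : Tendsto (fun n : ℕ => 1 / ((n : ℝ) + 1)) atTop (𝓝 0))
  set ψ : ℕ → J → ℝ := fun k j => θ j + t k * Θ (ν k) j with hψ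
  set c : ℕ → I → ℝ := fun k i => Real.exp (∑ j, θ j * A j i) * (f (ν k) i) ^ (t k) with hc
  -- the exponent identity
  have hkey : ∀ k i, Real.exp (∑ j, ψ k j * A j i)
      = c k i * Real.exp (t k * Real.log (∑ i', Real.exp (∑ j, Θ (ν k) j * A j i'))) := by
    intro k i
    set L := Real.log (∑ i', Real.exp (∑ j, Θ (ν k) j * A j i')) with hL
    have hf : f (ν k) i = Real.exp (∑ j, Θ (ν k) j * A j i - L) := by rw [hΘ (ν k)]
    have hrpow : (f (ν k) i) ^ (t k) = Real.exp ((∑ j, Θ (ν k) j * A j i - L) * t k) := by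
      rw [hf, ← Real.exp_mul]
    have hsplit : ∑ j, ψ k j * A j i
        = (∑ j, θ j * A j i) + t k * (∑ j, Θ (ν k) j * A j i) := by
      simp only [hψ]
      simp only [add_mul, Finset.sum_add_distrib, Finset.mul_sum, mul_assoc]
    simp only [hc]
    simp only [hrpow, hsplit, ← Real.exp_add]
    ring_nf
  -- the approximating sequence inside the family
  set r : ℕ → I → ℝ := fun k i =>
    Real.exp (∑ j, ψ k j * A j i - Real.log (∑ i', Real.exp (∑ j, ψ k j * A j i'))) with hr
  have hrc : ∀ k i, r k i = c k i / ∑ i', c k i' := by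
    intro k i
    have hS : (0:ℝ) < ∑ i', Real.exp (∑ j, ψ k j * A j i') :=
      Finset.sum_pos (fun _ _ => Real.exp_pos _) Finset.univ_nonempty
    simp only [hr]
    simp only [Real.exp_sub, Real.exp_log hS]
    set E := Real.exp (t k * Real.log (∑ i', Real.exp (∑ j, Θ (ν k) j * A j i'))) with hE
    have hnum : Real.exp (∑ j, ψ k j * A j i) = c k i * E := hkey k i
    have hden : ∑ i', Real.exp (∑ j, ψ k j * A j i') = (∑ i', c k i') * E := by
      rw [Finset.sum_mul]
      exact Finset.sum_congr rfl fun i' _ => hkey k i'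
    rw [hnum, hden, mul_div_mul_right _ _ (Real.exp_ne_zero _)]
  -- limits of c
  have hclim : ∀ i, Tendsto (fun k => c k i) atTop
      (𝓝 (if i ∈ F then Real.exp (∑ j, θ j * A j i) else 0)) := by
    intro i
    by_cases hpi : p i = 0
    · have hiF : i ∉ F := by simp [hF, hpi]
      rw [if_neg hiF]
      -- squeeze to 0
      have hb : ∀ k, c k i ≤ Real.exp (∑ j, θ j * A j i) * Real.exp (-((k:ℝ)+1)) := by
        intro k
        simp only [hc]
        refine mul_le_mul_of_nonneg_left ?_ (le_of_lt (Real.exp_pos _))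
        have h1 : (f (ν k) i) ^ (t k) ≤ (Real.exp (-((k:ℝ)+1)^2)) ^ (t k) :=
          Real.rpow_le_rpow (le_of_lt (hfpos _ i)) (hν2 k i hpi) (le_of_lt (htpos k))
        have h2 : (Real.exp (-((k:ℝ)+1)^2)) ^ (t k) = Real.exp (-((k:ℝ)+1)) := by
          rw [← Real.exp_mul]
          congr 1
          have hk : ((k:ℝ)+1) ≠ 0 := by positivity
          simp only [ht]
          field_simp
        calc (f (ν k) i) ^ (t k) ≤ (Real.exp (-((k:ℝ)+1)^2)) ^ (t k) := h1
          _ = Real.exp (-((k:ℝ)+1)) := h2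
      have hbnd : Tendsto (fun k : ℕ => Real.exp (∑ j, θ j * A j i) * Real.exp (-((k:ℝ)+1)))
          atTop (𝓝 0) := by
        have h3 : Tendsto (fun k : ℕ => -((k:ℝ)+1)) atTop atBot := by
          have h5 : Tendsto (fun k : ℕ => ((k:ℝ)+1)) atTop atTop :=
            tendsto_atTop_add_const_right atTop 1 tendsto_natCast_atTop_atTop
          exact tendsto_neg_atTop_atBot.comp h5
        have h4 : Tendsto (fun k : ℕ => Real.exp (-((k:ℝ)+1))) atTop (𝓝 0) :=
          Real.tendsto_exp_atBot.comp h3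
        simpa using h4.const_mul (Real.exp (∑ j, θ j * A j i))
      refine squeeze_zero (fun k => ?_) hb hbnd
      simp only [hc]
      exact mul_nonneg (le_of_lt (Real.exp_pos _))
        (Real.rpow_nonneg (le_of_lt (hfpos _ i)) _)
    · have hiF : i ∈ F := by simp [hF, hpi]
      rw [if_pos hiF]
      have h1 : Tendsto (fun k => f (ν k) i) atTop (𝓝 (p i)) := (hfi i).comp hνtend
      have h2 : Tendsto (fun k => (f (ν k) i) ^ (t k)) atTop (𝓝 ((p i) ^ (0:ℝ))) :=
        h1.rpow ht0 (Or.inl hpi)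
      rw [Real.rpow_zero] at h2
      simpa using h2.const_mul (Real.exp (∑ j, θ j * A j i))
  -- denominator limit
  have hD : ∑ i', (if i' ∈ F then Real.exp (∑ j, θ j * A j i') else 0)
      = ∑ i' ∈ F, Real.exp (∑ j, θ j * A j i') := by
    rw [Finset.sum_ite_mem, Finset.univ_inter]
  have hDpos : (0:ℝ) < ∑ i' ∈ F, Real.exp (∑ j, θ j * A j i') :=
    Finset.sum_pos (fun _ _ => Real.exp_pos _) ⟨i0, hi0⟩
  have hsumlim : Tendsto (fun k => ∑ i', c k i') atTop
      (𝓝 (∑ i' ∈ F, Real.exp (∑ j, θ j * A j i'))) := by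
    rw [← hD]
    exact tendsto_finset_sum _ fun i _ => hclim i
  -- pointwise limit of r is ptrunc
  have hri : ∀ i, Tendsto (fun k => r k i) atTop (𝓝 (ptrunc A F θ i)) := by
    intro i
    have hdiv := (hclim i).div hsumlim (ne_of_gt hDpos)
    have heq : (if i ∈ F then Real.exp (∑ j, θ j * A j i) else 0)
        / (∑ i' ∈ F, Real.exp (∑ j, θ j * A j i')) = ptrunc A F θ i := by
      unfold ptrunc
      by_cases hiF : i ∈ F
      · rw [if_pos hiF, if_pos hiF, Real.exp_sub, Real.exp_log hDpos]
      · rw [if_neg hiF, if_neg hiF, zero_div]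
    rw [heq] at hdiv
    simp only [hrc]; exact hdiv
  exact mem_closure_of_tendsto (tendsto_pi_nhds.mpr hri)
    (Filter.Eventually.of_forall fun k => ⟨ψ k, rfl⟩)
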